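/- Let A₁, …, A_N be measurable subsets of [0,1] such that |A_j| ≥ α > 0 for each j and |A_i ∩ A_j| ≤ K·|A_i|·|A_j| for all i ≠ j, where K ≥ 1. If Nα ≥ 2K then |⋃_j A_j| ≥ 1/(4K). -/

import Mathlib

open MeasureTheory

/-- Quasi-independence lower bound: if `|A j| ≥ α`, `|A i ∩ A j| ≤ K |A i| |A j|` for `i ≠ j`
and `N α ≥ 2K`, then `|⋃ A j| ≥ 1/(4K)`. -/
theorem stmt3 (N : ℕ) (A : Fin N → Set ℝ) (α K : ℝ) (hα : 0 < α) (hK : 1 ≤ K)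
    (hmeas : ∀ j, MeasurableSet (A j)) (hsub : ∀ j, A j ⊆ Set.Icc (0:ℝ) 1)
    (hsize : ∀ j, α ≤ (volume (A j)).toReal)
    (hcorr : ∀ i j, i ≠ j →
      (volume (A i ∩ A j)).toReal ≤ K * (volume (A i)).toReal * (volume (A j)).toReal)
    (hN : 2 * K ≤ N * α) :
    1 / (4 * K) ≤ (volume (⋃ j, A j)).toReal := by
  classical
  have hK0 : (0:ℝ) < K := lt_of_lt_of_le one_pos hK
  have hIcc : volume (Set.Icc (0:ℝ) 1) = 1 := by simp
  have hfin : ∀ s : Set ℝ, s ⊆ Set.Icc (0:ℝ) 1 → volume s ≠ ⊤ := by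
    intro s hs
    exact ((measure_mono hs).trans_lt (by rw [hIcc]; exact ENNReal.one_lt_top)).ne
  have hbigsub : (⋃ j, A j) ⊆ Set.Icc (0:ℝ) 1 := Set.iUnion_subset hsub
  have hbigfin : volume (⋃ j, A j) ≠ ⊤ := hfin _ hbigsub
  set a : Fin N → ℝ := fun j => (volume (A j)).toReal with ha
  set B : ℕ → Set ℝ := fun k => if h : k < N then A ⟨k, h⟩ else ∅ with hB
  have hBmeas : ∀ k, MeasurableSet (B k) := by
    intro k
    by_cases h : k < N <;> simp [hB, h, hmeas]
  have hBsub : ∀ k, B k ⊆ Set.Icc (0:ℝ) 1 := by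
    intro k
    by_cases h : k < N <;> simp [hB, h, hsub]
  have hBfin : ∀ k, volume (B k) ≠ ⊤ := fun k => hfin _ (hBsub k)
  set b : ℕ → ℝ := fun k => (volume (B k)).toReal with hb
  have hbnn : ∀ k, 0 ≤ b k := fun k => ENNReal.toReal_nonneg
  have hbcorr : ∀ i j, i ≠ j → (volume (B i ∩ B j)).toReal ≤ K * b i * b j := by
    intro i j hij
    by_cases hi : i < N
    · by_cases hj : j < N
      · have : (⟨i, hi⟩ : Fin N) ≠ ⟨j, hj⟩ := by
          simp [Fin.ext_iff, hij]
        have h := hcorr ⟨i, hi⟩ ⟨j, hj⟩ this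
        simpa [hb, hB, hi, hj] using h
      · have : B j = ∅ := by simp [hB, hj]
        rw [this]
        simp only [Set.inter_empty, measure_empty, ENNReal.toReal_zero]
        exact mul_nonneg (mul_nonneg hK0.le (hbnn i)) (hbnn j)
    · have : B i = ∅ := by simp [hB, hi]
      rw [this]
      simp only [Set.empty_inter, measure_empty, ENNReal.toReal_zero]
      exact mul_nonneg (mul_nonneg hK0.le (hbnn i)) (hbnn j)
  set U : ℕ → Set ℝ := fun n => ⋃ k ∈ Finset.range n, B k with hU
  have hUmeas : ∀ n, MeasurableSet (U n) := by
    intro n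
    exact Finset.measurableSet_biUnion _ (fun k _ => hBmeas k)
  have hUsub : ∀ n, U n ⊆ Set.Icc (0:ℝ) 1 := by
    intro n
    exact Set.iUnion₂_subset fun k _ => hBsub k
  have hUfin : ∀ n, volume (U n) ≠ ⊤ := fun n => hfin _ (hUsub n)
  set f : ℕ → ℝ := fun n => ∑ k ∈ Finset.range n, b k with hf
  have hfnn : ∀ n, 0 ≤ f n := fun n => Finset.sum_nonneg fun k _ => hbnn k
  -- key inclusion-exclusion bound
  have key : ∀ n, f n - K / 2 * (f n)^2 ≤ (volume (U n)).toReal := by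
    intro n
    induction n with
    | zero => simp [hf, hU]
    | succ n ih =>
      have hUn : U (n+1) = U n ∪ B n := by
        rw [hU]
        ext x
        simp only [Set.mem_iUnion, Set.mem_union, Finset.mem_range, Nat.lt_succ_iff_lt_or_eq]
        constructor
        · rintro ⟨k, hk | rfl, hx⟩
          · exact Or.inl ⟨k, hk, hx⟩
          · exact Or.inr hx
        · rintro (⟨k, hk, hx⟩ | hx)
          · exact ⟨k, Or.inl hk, hx⟩
          · exact ⟨n, Or.inr rfl, hx⟩
      have h1 : volume (U (n+1)) = volume (U n) + volume (B n \ U n) := by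
        rw [hUn, ← Set.union_diff_self,
          measure_union disjoint_sdiff_self_right ((hBmeas n).diff (hUmeas n))]
      have h2 : volume (B n) ≤ volume (B n \ U n) + ∑ k ∈ Finset.range n, volume (B n ∩ B k) := by
        have e1 : volume (B n \ U n) + volume (B n ∩ U n) = volume (B n) :=
          measure_diff_add_inter (B n) (hUmeas n)
        have e2 : B n ∩ U n = ⋃ k ∈ Finset.range n, (B n ∩ B k) := by
          rw [hU, Set.inter_iUnion₂]
        have e3 : volume (B n ∩ U n) ≤ ∑ k ∈ Finset.range n, volume (B n ∩ B k) := by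
          rw [e2]
          exact measure_biUnion_finset_le _ _
        calc volume (B n) = volume (B n \ U n) + volume (B n ∩ U n) := e1.symm
          _ ≤ _ := add_le_add_right e3 _
      set d : ℝ := (volume (B n \ U n)).toReal with hd
      have hdfin : volume (B n \ U n) ≠ ⊤ :=
        hfin _ ((Set.diff_subset).trans (hBsub n))
      have h1R : (volume (U (n+1))).toReal = (volume (U n)).toReal + d := by
        rw [h1, ENNReal.toReal_add (hUfin n) hdfin]
      have hsumfin : (∑ k ∈ Finset.range n, volume (B n ∩ B k)) ≠ ⊤ := by
        refine (lt_of_le_of_lt (Finset.sum_le_sum fun k _ =>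
          measure_mono (Set.inter_subset_left)) ?_).ne
        simp only [Finset.sum_const, nsmul_eq_mul]
        exact ENNReal.mul_lt_top (by simp) (lt_top_iff_ne_top.2 (hBfin n))
      have h2R : b n ≤ d + ∑ k ∈ Finset.range n, (volume (B n ∩ B k)).toReal := by
        have := ENNReal.toReal_mono (by
          rw [ENNReal.add_ne_top]
          exact ⟨hdfin, hsumfin⟩) h2
        rwa [ENNReal.toReal_add hdfin hsumfin, ENNReal.toReal_sum
          (fun k _ => (lt_of_le_of_lt (measure_mono Set.inter_subset_left)
            (lt_top_iff_ne_top.2 (hBfin n))).ne)] at this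
      have h3 : ∑ k ∈ Finset.range n, (volume (B n ∩ B k)).toReal ≤ K * b n * f n := by
        rw [hf]
        rw [Finset.mul_sum]
        refine Finset.sum_le_sum fun k hk => ?_
        exact hbcorr n k (by
          have := Finset.mem_range.1 hk
          omega)
      have hfs : f (n+1) = f n + b n := by
        rw [hf]; exact Finset.sum_range_succ _ _
      have hdlb : b n - K * b n * f n ≤ d := by linarith
      rw [h1R, hfs]
      nlinarith [hbnn n, hfnn n, sq_nonneg (b n), hK0, mul_nonneg (mul_nonneg hK0.le (sq_nonneg (b n))) (hfnn n)]
  -- total sum is large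
  have hfN : 2 * K ≤ f N := by
    have e : f N = ∑ j : Fin N, a j := by
      have : f N = ∑ k ∈ Finset.range N, b k := rfl
      rw [this, ← Fin.sum_univ_eq_sum_range b N]
      refine Finset.sum_congr rfl fun j _ => ?_
      simp [hb, hB, j.isLt, ha]
    have : (N : ℝ) * α ≤ ∑ j : Fin N, a j := by
      calc (N : ℝ) * α = ∑ _j : Fin N, α := by
            simp [Finset.sum_const, mul_comm]
        _ ≤ ∑ j : Fin N, a j := Finset.sum_le_sum fun j _ => hsize j
    linarith [e ▸ this]
  by_cases hbig : ∃ j : Fin N, 1 / (2 * K) ≤ a j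
  · obtain ⟨j, hj⟩ := hbig
    have h1 : (volume (A j)).toReal ≤ (volume (⋃ j, A j)).toReal :=
      ENNReal.toReal_mono hbigfin (measure_mono (Set.subset_iUnion A j))
    have : 1 / (4 * K) ≤ 1 / (2 * K) := by
      apply one_div_le_one_div_of_le (by linarith) (by linarith)
    linarith
  · push_neg at hbig
    have hbsmall : ∀ k, b k < 1 / (2 * K) := by
      intro k
      by_cases h : k < N
      · have := hbig ⟨k, h⟩
        simpa [hb, hB, h, ha] using this
      · have : B k = ∅ := by simp [hB, h]
        rw [hb]
        simp only [this, measure_empty, ENNReal.toReal_zero]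
        positivity
    have hPN : 1 / (2 * K) ≤ f N := by
      have h1 : 1 / (2 * K) ≤ 1 := by
        rw [div_le_one (by linarith)]; linarith
      linarith
    have hex : ∃ n, 1 / (2 * K) ≤ f n := ⟨N, hPN⟩
    set n := Nat.find hex with hn
    have hfn : 1 / (2 * K) ≤ f n := Nat.find_spec hex
    have hn0 : n ≠ 0 := by
      intro h
      rw [h] at hfn
      have : f 0 = 0 := by simp [hf]
      rw [this] at hfn
      have : (0:ℝ) < 1 / (2 * K) := by positivity
      linarith
    obtain ⟨m, hm⟩ : ∃ m, n = m + 1 := Nat.exists_eq_succ_of_ne_zero hn0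
    have hfm : f m < 1 / (2 * K) := by
      have := Nat.find_min hex (by omega : m < n)
      linarith [lt_of_not_ge this]
    have hfs : f n = f m + b m := by
      rw [hm, hf]; exact Finset.sum_range_succ _ _
    have hfub : f n < 1 / K := by
      have := hbsmall m
      have h2 : 1 / (2 * K) + 1 / (2 * K) = 1 / K := by
        field_simp
        norm_num
      linarith
    have hUle : (volume (U n)).toReal ≤ (volume (⋃ j, A j)).toReal := by
      refine ENNReal.toReal_mono hbigfin (measure_mono ?_)
      refine Set.iUnion₂_subset fun k hk => ?_
      by_cases h : k < N
      · simp only [hB, dif_pos h]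
        exact Set.subset_iUnion A ⟨k, h⟩
      · simp [hB, h]
    have hkey := key n
    -- 1/(4K) ≤ f n - K/2 (f n)^2
    have h1 : 1 ≤ 2 * K * f n := by
      rw [div_le_iff₀ (by linarith : (0:ℝ) < 2 * K)] at hfn
      linarith [hfn]
    have h2 : K * f n < 1 := by
      rw [lt_div_iff₀ hK0] at hfub
      linarith
    have hmain : 1 / (4 * K) ≤ f n - K / 2 * (f n)^2 := by
      rw [div_le_iff₀ (by linarith : (0:ℝ) < 4 * K)]
      nlinarith [mul_nonneg (by linarith : (0:ℝ) ≤ 2 * K * f n - 1) (by linarith : (0:ℝ) ≤ 1 - K * f n), hfnn n, hK0]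
    linarith
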